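/- Fix ε > 0 and a measurable I ⊆ 𝕋^d. Let μ be a probability measure on 𝕋^d × ℝ^d with |E(χ_{I,t}) − |I|| ≤ C_μ t^{-2r} for all t > 0, and let t₀ = ε^{-1/(2r)} (2C_μ)^{1/(2r)}. Then for every t ≥ t₀, the probability (under μ^{⊗N}) that the fraction f_I(X,P,t) of N independent particles in I at time t satisfies |f_I(X,P,t) − |I|| > ε is at most 2 exp(−ε²N/2). -/

import Mathlib

open MeasureTheory

def cube (d : ℕ) : Set (Fin d → ℝ) := Set.univ.pi fun _ => Set.Ico (0:ℝ) 1

noncomputable def chiT (d : ℕ) (I : Set (Fin d → ℝ)) (y : Fin d → ℝ) : ℝ :=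
  Set.indicator I (fun _ => (1:ℝ)) (fun i => Int.fract (y i))

noncomputable def fracIn (d N : ℕ) (I : Set (Fin d → ℝ)) (t : ℝ)
    (ω : Fin N → (Fin d → ℝ) × (Fin d → ℝ)) : ℝ :=
  (∑ i, chiT d I ((ω i).1 + t • (ω i).2)) / N

/-- Hoeffding's lemma for a Bernoulli-type bound. -/
lemma hoeff_scalar {m : ℝ} (hm0 : 0 ≤ m) (hm1 : m ≤ 1) (l : ℝ) :
    (1 - m + m * Real.exp l) * Real.exp (-(l * m)) ≤ Real.exp (l ^ 2 / 8) := by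
  set g : ℝ → ℝ := fun l => 1 - m + m * Real.exp l with hgdef
  have hg : ∀ x : ℝ, 0 < g x := by
    intro x
    have he := Real.exp_pos x
    show 0 < 1 - m + m * Real.exp x
    rcases lt_or_ge (Real.exp x) 1 with h | h
    · nlinarith
    · nlinarith
  set f : ℝ → ℝ := fun l => Real.log (g l) - l * m - l ^ 2 / 8 with hfdef
  set f' : ℝ → ℝ := fun l => m * Real.exp l / g l - m - l / 4 with hf'def
  set f'' : ℝ → ℝ := fun l =>
    (m * Real.exp l * g l - m * Real.exp l * (m * Real.exp l)) / (g l) ^ 2 - 4⁻¹ with hf''def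
  have hgd : ∀ x : ℝ, HasDerivAt g (m * Real.exp x) x := by
    intro x
    exact ((Real.hasDerivAt_exp x).const_mul m).const_add (1 - m)
  have hfd : ∀ x : ℝ, HasDerivAt f (f' x) x := by
    intro x
    have h1 : HasDerivAt (fun y => Real.log (g y)) (m * Real.exp x / g x) x :=
      (hgd x).log (hg x).ne'
    have h2 : HasDerivAt (fun y : ℝ => y * m) m x := by
      simpa using (hasDerivAt_id x).mul_const m
    have h3 : HasDerivAt (fun y : ℝ => y ^ 2 / 8) (x / 4) x := by
      have := (hasDerivAt_pow 2 x).div_const 8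
      simpa using this.congr_deriv (by ring)
    exact (h1.sub h2).sub h3
  have hfd' : ∀ x : ℝ, HasDerivAt f' (f'' x) x := by
    intro x
    have h1 : HasDerivAt (fun y => m * Real.exp y / g y)
        ((m * Real.exp x * g x - m * Real.exp x * (m * Real.exp x)) / (g x) ^ 2) x :=
      ((Real.hasDerivAt_exp x).const_mul m).div (hgd x) (hg x).ne'
    have h2 : HasDerivAt (fun _ : ℝ => m) 0 x := hasDerivAt_const x m
    have h3 : HasDerivAt (fun y : ℝ => y / 4) (1 / 4) x := by
      simpa using (hasDerivAt_id x).div_const 4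
    exact ((h1.sub h2).sub h3).congr_deriv (by simp only [hf''def]; ring)
  have hf''le : ∀ x : ℝ, f'' x ≤ 0 := by
    intro x
    have hgx := hg x
    have he := Real.exp_pos x
    have key : m * Real.exp x * g x - m * Real.exp x * (m * Real.exp x) ≤ (g x) ^ 2 / 4 := by
      nlinarith [sq_nonneg ((1 - m) - m * Real.exp x)]
    have : (m * Real.exp x * g x - m * Real.exp x * (m * Real.exp x)) / (g x) ^ 2 ≤ 1 / 4 := by
      rw [div_le_iff₀ (by positivity)]
      nlinarith
    simp only [hf''def]
    linarith
  have hf'anti : Antitone f' := antitone_of_hasDerivAt_nonpos hfd' hf''le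
  have hf'0 : f' 0 = 0 := by
    simp [hf'def, hgdef]
  have hfle : ∀ x : ℝ, f x ≤ f 0 := by
    intro x
    rcases le_or_gt 0 x with hx | hx
    · have hanti : AntitoneOn f (Set.Ici 0) := by
        apply antitoneOn_of_deriv_nonpos (convex_Ici 0)
        · exact fun y _ => ((hfd y).differentiableAt).continuousAt.continuousWithinAt
        · exact fun y _ => ((hfd y).differentiableAt).differentiableWithinAt
        · intro y hy
          rw [(hfd y).deriv]
          rw [interior_Ici] at hy
          have := hf'anti (le_of_lt hy)
          rw [hf'0] at this
          exact this
      exact hanti (Set.self_mem_Ici) hx hx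
    · have hmono : MonotoneOn f (Set.Iic 0) := by
        apply monotoneOn_of_deriv_nonneg (convex_Iic 0)
        · exact fun y _ => ((hfd y).differentiableAt).continuousAt.continuousWithinAt
        · exact fun y _ => ((hfd y).differentiableAt).differentiableWithinAt
        · intro y hy
          rw [(hfd y).deriv]
          rw [interior_Iic] at hy
          have := hf'anti (le_of_lt hy)
          rw [hf'0] at this
          linarith
      exact hmono hx.le Set.self_mem_Iic hx.le
  have hf0 : f 0 = 0 := by simp [hfdef, hgdef]
  have hlog : Real.log (g l) ≤ l * m + l ^ 2 / 8 := by
    have := hfle l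
    rw [hf0] at this
    simp only [hfdef] at this
    linarith
  have : g l ≤ Real.exp (l * m + l ^ 2 / 8) := by
    rw [← Real.exp_log (hg l)]
    exact Real.exp_le_exp.mpr hlog
  calc g l * Real.exp (-(l * m)) ≤ Real.exp (l * m + l ^ 2 / 8) * Real.exp (-(l * m)) := by
        exact mul_le_mul_of_nonneg_right this (Real.exp_pos _).le
    _ = Real.exp (l ^ 2 / 8) := by rw [← Real.exp_add]; ring_nf


section onevar

variable {E : Type*} [MeasurableSpace E] (μ : Measure E) [IsProbabilityMeasure μ]

/-- mgf bound for a {0,1}-valued random variable, centered. -/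
lemma onevar_bound (h : E → ℝ) (hmeas : Measurable h) (h01 : ∀ z, h z = 0 ∨ h z = 1)
    (c : ℝ) :
    Integrable (fun z => Real.exp (c * (h z - ∫ w, h w ∂μ))) μ ∧
      (∫ z, Real.exp (c * (h z - ∫ w, h w ∂μ)) ∂μ) ≤ Real.exp (c ^ 2 / 8) := by
  set m := ∫ w, h w ∂μ with hm
  have hbd : ∀ z, |h z| ≤ 1 := by
    intro z; rcases h01 z with h' | h' <;> simp [h']
  have hint : Integrable h μ :=
    (integrable_const (1:ℝ)).mono' hmeas.aestronglyMeasurable (Filter.Eventually.of_forall hbd)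
  have hm0 : 0 ≤ m := integral_nonneg (fun z => by rcases h01 z with h' | h' <;> simp [h'])
  have hm1 : m ≤ 1 := by
    have : ∫ w, h w ∂μ ≤ ∫ _, (1:ℝ) ∂μ :=
      integral_mono hint (integrable_const 1) (fun z => by
        rcases h01 z with h' | h' <;> simp [h'])
    simpa using this
  have hptw : ∀ z, Real.exp (c * (h z - m)) =
      (1 - h z + h z * Real.exp c) * Real.exp (-(c * m)) := by
    intro z
    rcases h01 z with h' | h'
    · rw [h', show c * ((0:ℝ) - m) = -(c * m) by ring]; ring
    · rw [h']
      rw [show c * (1 - m) = c + -(c * m) by ring, Real.exp_add]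
      ring
  have hint2 : Integrable (fun z => (1 - h z + h z * Real.exp c) * Real.exp (-(c * m))) μ :=
    (((integrable_const (1:ℝ)).sub hint).add (hint.mul_const _)).mul_const _
  constructor
  · exact hint2.congr (Filter.Eventually.of_forall (fun z => (hptw z).symm))
  · have : (∫ z, Real.exp (c * (h z - m)) ∂μ)
        = (1 - m + m * Real.exp c) * Real.exp (-(c * m)) := by
      rw [integral_congr_ae (Filter.Eventually.of_forall hptw)]
      rw [integral_mul_const]
      congr 1
      have e1 : ∀ a, 1 - h a + h a * Real.exp c = 1 + h a * (Real.exp c - 1) :=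
        fun a => by ring
      rw [integral_congr_ae (Filter.Eventually.of_forall e1),
        integral_add (integrable_const 1) (hint.mul_const _), integral_const,
        integral_mul_const]
      simp [hm]
      ring
    rw [this]
    exact hoeff_scalar hm0 hm1 c

end onevar

/-- for `t ≥ t₀ = ε^{-1/2r}(2C_μ)^{1/2r}`, the probability that the
fraction of particles in `I` deviates from `|I|` by more than `ε` is at most
`2 exp(−ε²N/2)`. -/
theorem stmt6 (d N : ℕ) (hN : 1 ≤ N)
    (μ : Measure ((Fin d → ℝ) × (Fin d → ℝ))) [IsProbabilityMeasure μ]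
    (Cμ r : ℝ) (hC : 0 < Cμ) (hr : 0 < r)
    (hμ : ∀ J : Set (Fin d → ℝ), J ⊆ cube d → MeasurableSet J → ∀ t : ℝ, 0 < t →
      |(∫ z, chiT d J (z.1 + t • z.2) ∂μ) - (volume J).toReal| ≤ Cμ * t ^ (-(2 * r)))
    (ε : ℝ) (hε : 0 < ε)
    (I : Set (Fin d → ℝ)) (hI : I ⊆ cube d) (hImeas : MeasurableSet I)
    (t : ℝ) (ht : ε ^ (-(1 / (2 * r))) * (2 * Cμ) ^ (1 / (2 * r)) ≤ t) :
    ((Measure.pi fun _ : Fin N => μ)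
        {ω | ε < |fracIn d N I t ω - (volume I).toReal|}).toReal ≤
      2 * Real.exp (-(ε ^ 2) * N / 2) := by
  classical
  set E := (Fin d → ℝ) × (Fin d → ℝ)
  -- step 0: t positivity
  have h2r : (0:ℝ) < 2 * r := by linarith
  have ht0pos : 0 < ε ^ (-(1 / (2 * r))) * (2 * Cμ) ^ (1 / (2 * r)) :=
    mul_pos (Real.rpow_pos_of_pos hε _) (Real.rpow_pos_of_pos (by linarith) _)
  have htpos : 0 < t := lt_of_lt_of_le ht0pos ht
  -- step 1: mean estimate
  set h : E → ℝ := fun z => chiT d I (z.1 + t • z.2) with hhdef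
  set m := ∫ z, h z ∂μ with hmdef
  set v := (volume I).toReal with hvdef
  have hmean : |m - v| ≤ ε / 2 := by
    have h1 := hμ I hI hImeas t htpos
    have h2 : Cμ * t ^ (-(2 * r)) ≤ ε / 2 := by
      have hmono : t ^ (-(2 * r)) ≤
          (ε ^ (-(1 / (2 * r))) * (2 * Cμ) ^ (1 / (2 * r))) ^ (-(2 * r)) :=
        Real.rpow_le_rpow_of_nonpos ht0pos ht (by linarith)
      have hcalc : (ε ^ (-(1 / (2 * r))) * (2 * Cμ) ^ (1 / (2 * r))) ^ (-(2 * r))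
          = ε * (2 * Cμ)⁻¹ := by
        rw [Real.mul_rpow (Real.rpow_pos_of_pos hε _).le
          (Real.rpow_pos_of_pos (by linarith) _).le,
          ← Real.rpow_mul hε.le, ← Real.rpow_mul (by linarith : (0:ℝ) ≤ 2 * Cμ),
          show -(1 / (2 * r)) * -(2 * r) = 1 by field_simp,
          show 1 / (2 * r) * -(2 * r) = -1 by field_simp,
          Real.rpow_one, Real.rpow_neg_one]
      calc Cμ * t ^ (-(2 * r)) ≤ Cμ * (ε * (2 * Cμ)⁻¹) := by
            rw [← hcalc]; exact mul_le_mul_of_nonneg_left hmono hC.le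
        _ = ε / 2 := by field_simp
    exact le_trans h1 h2
  -- measurability of h
  have hhm : Measurable h := by
    apply Measurable.indicator measurable_const hImeas |>.comp
    exact Measurable.comp (measurable_pi_lambda _ fun i =>
      (Measurable.fract (measurable_pi_apply i)))
      (measurable_fst.add (measurable_snd.const_smul t))
  have h01 : ∀ z, h z = 0 ∨ h z = 1 := by
    intro z
    simp only [hhdef, chiT, Set.indicator_apply]
    split <;> simp
  -- product measure setup
  letI : MeasureSpace E := ⟨μ⟩
  set Pn := (Measure.pi fun _ : Fin N => μ) with hPdef
  haveI : IsProbabilityMeasure Pn := by rw [hPdef]; infer_instance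
  set S : (Fin N → E) → ℝ := fun ω => ∑ i, (h (ω i) - m) with hSdef
  have hSmeas : Measurable S :=
    Finset.measurable_sum _ fun i _ => (hhm.comp (measurable_pi_apply i)).sub measurable_const
  have hSbd : ∀ ω, |S ω| ≤ N * (1 + |m|) := by
    intro ω
    calc |S ω| ≤ ∑ i, |h (ω i) - m| := Finset.abs_sum_le_sum_abs _ _
      _ ≤ ∑ _i : Fin N, (1 + |m|) := by
          apply Finset.sum_le_sum
          intro i _
          have h1 : |h (ω i)| ≤ 1 := by rcases h01 (ω i) with h' | h' <;> simp [h']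
          calc |h (ω i) - m| ≤ |h (ω i)| + |m| := abs_sub _ _
            _ ≤ 1 + |m| := by linarith
      _ = N * (1 + |m|) := by simp [Finset.sum_const, mul_comm]; ring
  have hintS : ∀ c : ℝ, Integrable (fun ω => Real.exp (c * S ω)) Pn := by
    intro c
    apply (integrable_const (Real.exp (|c| * ((N : ℝ) * (1 + |m|))))).mono'
      (Real.measurable_exp.comp (hSmeas.const_mul c)).aestronglyMeasurable
    apply Filter.Eventually.of_forall
    intro ω
    simp only [Function.comp_apply, Real.norm_eq_abs, abs_of_pos (Real.exp_pos _)]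
    apply Real.exp_le_exp.mpr
    calc c * S ω ≤ |c * S ω| := le_abs_self _
      _ = |c| * |S ω| := abs_mul _ _
      _ ≤ |c| * ((N : ℝ) * (1 + |m|)) := by
          apply mul_le_mul_of_nonneg_left (hSbd ω) (abs_nonneg c)
  have hprod : ∀ c : ℝ, ∫ ω, Real.exp (c * S ω) ∂Pn
      = (∫ z, Real.exp (c * (h z - m)) ∂μ) ^ N := by
    intro c
    have hpt : ∀ ω : Fin N → E, Real.exp (c * S ω)
        = ∏ i, Real.exp (c * (h (ω i) - m)) := by
      intro ω
      rw [← Real.exp_sum]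
      congr 1
      rw [hSdef, Finset.mul_sum]
    rw [integral_congr_ae (Filter.Eventually.of_forall hpt)]
    have := MeasureTheory.integral_fintype_prod_eq_pow (ι := Fin N) (μ := μ)
      (fun z : E => Real.exp (c * (h z - m)))
    simpa using this
  have hob := fun c => onevar_bound μ h hhm h01 c
  have hmgfbd : ∀ c : ℝ, ProbabilityTheory.mgf S Pn c ≤ (Real.exp (c ^ 2 / 8)) ^ N := by
    intro c
    have : ProbabilityTheory.mgf S Pn c = (∫ z, Real.exp (c * (h z - m)) ∂μ) ^ N := by
      simp only [ProbabilityTheory.mgf]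
      exact hprod c
    rw [this]
    exact pow_le_pow_left₀ (integral_nonneg fun z => (Real.exp_pos _).le) (hob c).2 N
  -- Chernoff, upper tail
  have hNpos : (0:ℝ) < N := by exact_mod_cast hN
  have hup : (Pn {ω | (N:ℝ) * ε / 2 ≤ S ω}).toReal ≤ Real.exp (-(ε ^ 2) * N / 2) := by
    have hcher := ProbabilityTheory.measure_ge_le_exp_mul_mgf (X := S) (μ := Pn)
      (t := 2 * ε) ((N:ℝ) * ε / 2) (by positivity) (hintS (2 * ε))
    calc (Pn {ω | (N:ℝ) * ε / 2 ≤ S ω}).toReal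
        ≤ Real.exp (-(2 * ε) * ((N:ℝ) * ε / 2)) * ProbabilityTheory.mgf S Pn (2 * ε) := hcher
      _ ≤ Real.exp (-(2 * ε) * ((N:ℝ) * ε / 2)) * (Real.exp ((2 * ε) ^ 2 / 8)) ^ N := by
          exact mul_le_mul_of_nonneg_left (hmgfbd (2 * ε)) (Real.exp_pos _).le
      _ = Real.exp (-(ε ^ 2) * N / 2) := by
          rw [← Real.exp_nat_mul, ← Real.exp_add]
          congr 1
          ring
  -- Chernoff, lower tail
  have hlow : (Pn {ω | S ω ≤ -((N:ℝ) * ε / 2)}).toReal ≤ Real.exp (-(ε ^ 2) * N / 2) := by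
    have hcher := ProbabilityTheory.measure_le_le_exp_mul_mgf (X := S) (μ := Pn)
      (t := -(2 * ε)) (-((N:ℝ) * ε / 2)) (by linarith) (hintS (-(2 * ε)))
    calc (Pn {ω | S ω ≤ -((N:ℝ) * ε / 2)}).toReal
        ≤ Real.exp (-(-(2 * ε)) * -((N:ℝ) * ε / 2)) * ProbabilityTheory.mgf S Pn (-(2 * ε)) :=
          hcher
      _ ≤ Real.exp (-(-(2 * ε)) * -((N:ℝ) * ε / 2)) * (Real.exp ((-(2 * ε)) ^ 2 / 8)) ^ N := by
          exact mul_le_mul_of_nonneg_left (hmgfbd (-(2 * ε))) (Real.exp_pos _).le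
      _ = Real.exp (-(ε ^ 2) * N / 2) := by
          rw [← Real.exp_nat_mul, ← Real.exp_add]
          congr 1
          ring
  -- event inclusion
  have hsub : {ω : Fin N → E | ε < |fracIn d N I t ω - v|}
      ⊆ {ω | (N:ℝ) * ε / 2 ≤ S ω} ∪ {ω | S ω ≤ -((N:ℝ) * ε / 2)} := by
    intro ω hw
    simp only [Set.mem_setOf_eq, Set.mem_union] at hw ⊢
    have hfrac : fracIn d N I t ω = (∑ i, h (ω i)) / N := rfl
    have hS : S ω = (N:ℝ) * (fracIn d N I t ω - m) := by
      rw [hSdef]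
      simp only [Finset.sum_sub_distrib, Finset.sum_const, Finset.card_univ, Fintype.card_fin,
        nsmul_eq_mul, hfrac]
      field_simp
    have habs : ε / 2 < |fracIn d N I t ω - m| := by
      have h1 : |fracIn d N I t ω - v| ≤ |fracIn d N I t ω - m| + |m - v| :=
        abs_sub_le _ _ _
      linarith [hmean]
    rcases lt_abs.mp habs with h' | h'
    · left
      rw [hS]
      nlinarith
    · right
      rw [hS]
      nlinarith
  -- conclusion
  have hfin : (Pn {ω | ε < |fracIn d N I t ω - v|}).toReal
      ≤ (Pn {ω | (N:ℝ) * ε / 2 ≤ S ω}).toReal + (Pn {ω | S ω ≤ -((N:ℝ) * ε / 2)}).toReal := by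
    rw [← ENNReal.toReal_add (measure_ne_top _ _) (measure_ne_top _ _)]
    exact ENNReal.toReal_mono
      (by exact ENNReal.add_ne_top.mpr ⟨measure_ne_top _ _, measure_ne_top _ _⟩)
      (le_trans (measure_mono hsub) (measure_union_le _ _))
  calc (Pn {ω | ε < |fracIn d N I t ω - v|}).toReal
      ≤ (Pn {ω | (N:ℝ) * ε / 2 ≤ S ω}).toReal + (Pn {ω | S ω ≤ -((N:ℝ) * ε / 2)}).toReal := hfin
    _ ≤ Real.exp (-(ε ^ 2) * N / 2) + Real.exp (-(ε ^ 2) * N / 2) := add_le_add hup hlow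
    _ = 2 * Real.exp (-(ε ^ 2) * N / 2) := by ring
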